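/- If a finitary inference procedure I satisfies DI1 and enforces minimal default independence, then I is not representation independent. -/

import Mathlib

/-- A probability measure (probability mass function) on a finite type. -/
structure PM (X : Type) [Fintype X] where
  pm : X → ℝ
  nonneg : ∀ x, 0 ≤ pm x
  total : ∑ x, pm x = 1

namespace PM

variable {X Y : Type} [Fintype X] [Fintype Y]

/-- The probability of a set `S`: `μ(S) = ∑_{x ∈ S} μ(x)`. -/
noncomputable def prob (μ : PM X) (S : Set X) : ℝ := ∑ x, S.indicator μ.pm x

lemma prob_nonneg (μ : PM X) (S : Set X) : 0 ≤ μ.prob S :=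
  Finset.sum_nonneg fun x _ => Set.indicator_apply_nonneg fun _ => μ.nonneg x

/-- Marginal on the first component: `μ_X(A) = μ(A × Y)`. -/
noncomputable def margFst (μ : PM (X × Y)) : PM X where
  pm x := ∑ y, μ.pm (x, y)
  nonneg x := Finset.sum_nonneg fun y _ => μ.nonneg (x, y)
  total := by rw [← μ.total, ← Fintype.sum_prod_type]

/-- Marginal on the second component: `μ_Y(B) = μ(X × B)`. -/
noncomputable def margSnd (μ : PM (X × Y)) : PM Y where
  pm y := ∑ x, μ.pm (x, y)
  nonneg y := Finset.sum_nonneg fun x _ => μ.nonneg (x, y)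
  total := by rw [← μ.total, ← Fintype.sum_prod_type_right]

/-- Conditioning `μ|S`; the junk value `μ` is returned when `μ(S) = 0`. -/
noncomputable def cond (μ : PM X) (S : Set X) : PM X :=
  if h : 0 < μ.prob S then
    { pm := fun x => S.indicator μ.pm x / μ.prob S
      nonneg := fun x =>
        div_nonneg (Set.indicator_apply_nonneg fun _ => μ.nonneg x) (le_of_lt h)
      total := by
        rw [← Finset.sum_div]
        exact div_self (ne_of_gt h) }
  else μ

end PM

open PM

/-- An `X`-inference procedure: a partial map on sets of probability measures. -/
structure InfProc (X : Type) [Fintype X] where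
  dom : Set (Set (PM X))
  map : Set (PM X) → Set (PM X)
  map_subset : ∀ A ∈ dom, map A ⊆ A
  map_empty_iff : ∀ A ∈ dom, (map A = ∅ ↔ A = ∅)

/-- `KB ⊢_I θ`. -/
def Infers {X : Type} [Fintype X] (I : InfProc X) (KB θ : Set (PM X)) : Prop :=
  I.map KB ⊆ θ

section Lift

variable {X Y : Type} [Fintype X] [Fintype Y]

/-- A constraint on `Δ_X` viewed as a constraint on `Δ_{X×Y}`: `KB↑`. -/
def liftKB (Y : Type) [Fintype Y] (KB : Set (PM X)) : Set (PM (X × Y)) :=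
  {μ | margFst μ ∈ KB}

/-- `proj_X(B) = {μ_X : μ ∈ B}`. -/
def projFst (B : Set (PM (X × Y))) : Set (PM X) := margFst '' B

/-- `ψ ⊆ Δ_{X×Y}` is `X`-conservative over `KB ⊆ Δ_X`. -/
def Conservative (KB : Set (PM X)) (ψ : Set (PM (X × Y))) : Prop :=
  projFst (liftKB Y KB ∩ ψ) = KB

end Lift

/-- Robustness of a finitary inference procedure. -/
def Robust (I : ∀ (X : Type) [Fintype X], InfProc X) : Prop :=
  ∀ (X Y : Type) [Fintype X] [Fintype Y], ∀ KB φ : Set (PM X),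
    KB ∈ (I X).dom → ∀ ψ : Set (PM (X × Y)), Conservative KB ψ →
      (Infers (I X) KB φ ↔ Infers (I (X × Y)) (liftKB Y KB ∩ ψ) (liftKB Y φ))

/-- An inference procedure is essentially entailment. -/
def EssEntail {X : Type} [Fintype X] (I : InfProc X) : Prop :=
  ∀ KB ∈ I.dom, ∀ (S : Set X) (α β : ℝ),
    Infers I KB {μ | α < μ.prob S ∧ μ.prob S < β} →
    KB ⊆ {μ | α ≤ μ.prob S ∧ μ.prob S ≤ β}

def DI1 (I : ∀ (X : Type) [Fintype X], InfProc X) : Prop :=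
  ∀ (X : Type) [Fintype X], ∀ (S : Set X) (α β : ℝ), α ≤ β →
    {μ : PM X | α ≤ μ.prob S ∧ μ.prob S ≤ β} ∈ (I X).dom

def DI2 (I : ∀ (X : Type) [Fintype X], InfProc X) : Prop :=
  ∀ (X Y : Type) [Fintype X] [Fintype Y], ∀ KB : Set (PM X),
    KB ∈ (I X).dom → liftKB Y KB ∈ (I (X × Y)).dom

def DI3 (I : ∀ (X : Type) [Fintype X], InfProc X) : Prop :=
  ∀ (X : Type) [Fintype X], ∀ KB₁ KB₂ : Set (PM X),
    KB₁ ∈ (I X).dom → KB₂ ∈ (I X).dom → KB₁ ∩ KB₂ ∈ (I X).dom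

/-- An `X`-`Y` embedding: a homomorphism of set algebras. -/
structure Emb (X Y : Type) where
  f : Set X → Set Y
  map_union : ∀ S T, f (S ∪ T) = f S ∪ f T
  map_compl : ∀ S, f Sᶜ = (f S)ᶜ

/-- A faithful embedding. -/
def Emb.Faithful {X Y : Type} (e : Emb X Y) : Prop :=
  ∀ S T : Set X, S ⊆ T ↔ e.f S ⊆ e.f T

section Embeddings

variable {X Y : Type} [Fintype X] [Fintype Y]

/-- `μ` and `ν` correspond under `f`. -/
def Corr (e : Emb X Y) (μ : PM X) (ν : PM Y) : Prop :=
  ∀ S : Set X, μ.prob S = ν.prob (e.f S)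

/-- `f*(D)`, the union over `μ ∈ D` of the measures corresponding to `μ`. -/
def fstar (e : Emb X Y) (D : Set (PM X)) : Set (PM Y) :=
  {ν | ∃ μ ∈ D, Corr e μ ν}

/-- Sets of measures `D_X` and `D_Y` correspond under `f`. -/
def SetCorr (e : Emb X Y) (DX : Set (PM X)) (DY : Set (PM Y)) : Prop :=
  (∀ ν ∈ DY, ∃ μ ∈ DX, Corr e μ ν) ∧ (∀ μ ∈ DX, ∃ ν ∈ DY, Corr e μ ν)

end Embeddings

/-- Representation independence of a finitary inference procedure. -/
def RepInd (I : ∀ (X : Type) [Fintype X], InfProc X) : Prop :=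
  ∀ (X Y : Type) [Fintype X] [Fintype Y] (e : Emb X Y), e.Faithful →
    (∀ KB : Set (PM X), KB ∈ (I X).dom ↔ fstar e KB ∈ (I Y).dom) ∧
    (∀ KB : Set (PM X), KB ∈ (I X).dom → ∀ θ : Set (PM X),
      (Infers (I X) KB θ ↔ Infers (I Y) (fstar e KB) (fstar e θ)))

def DI4 (I : ∀ (X : Type) [Fintype X], InfProc X) : Prop :=
  ∀ (X Y : Type) [Fintype X] [Fintype Y] (e : Emb X Y), e.Faithful →
    ∀ KB : Set (PM X), (KB ∈ (I X).dom ↔ fstar e KB ∈ (I Y).dom)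

/-- `A ⇔ B` for sets of measures. -/
def iffSet {α : Type*} (A B : Set α) : Set α := (A ∩ B) ∪ (Aᶜ ∩ Bᶜ)

def DI5 (I : ∀ (X : Type) [Fintype X], InfProc X) : Prop :=
  ∀ (X Y : Type) [Fintype X] [Fintype Y] (KB : Set (PM (X × Y))) (e : Emb X Y),
    e.Faithful → KB ∈ (I (X × Y)).dom → ∀ φ₁ : Set (PM X),
      KB ∩ iffSet (liftKB Y φ₁) {μ | margSnd μ ∈ fstar e φ₁} ∈ (I (X × Y)).dom

/-- Minimal default independence. -/
def MDI (I : ∀ (X : Type) [Fintype X], InfProc X) : Prop :=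
  ∀ (X Y : Type) [Fintype X] [Fintype Y], ∀ KB : Set (PM X), ∀ (S : Set X) (T : Set Y),
    liftKB Y KB ∈ (I (X × Y)).dom →
    Infers (I (X × Y)) (liftKB Y KB)
      {μ | μ.prob (S ×ˢ T) = μ.prob (S ×ˢ (Set.univ : Set Y)) * μ.prob ((Set.univ : Set X) ×ˢ T)}

/-- `KB` depends only on `S₁, …, S_k`. -/
def DependsOnly {X : Type} [Fintype X] {k : ℕ} (KB : Set (PM X)) (S : Fin k → Set X) : Prop :=
  ∀ μ μ' : PM X, (∀ i, μ.prob (S i) = μ'.prob (S i)) → (μ ∈ KB ↔ μ' ∈ KB)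

/-- An atom over `S₁, …, S_k`. -/
def Atom {X : Type} {k : ℕ} (S : Fin k → Set X) (c : Fin k → Bool) : Set X :=
  ⋂ i, (if c i then S i else (S i)ᶜ)

section KL

variable {X : Type} [Fintype X]

/-- Absolute continuity of pmfs. -/
def AbsCont (μ' μ : PM X) : Prop := ∀ x, μ.pm x = 0 → μ'.pm x = 0

/-- Relative entropy `D(μ'‖μ) ∈ [0,∞]` (it is `⊤` unless `μ' ≪ μ`). -/
noncomputable def KL (μ' μ : PM X) : EReal := by
  classical
  exact if AbsCont μ' μ then
    ((∑ x, μ'.pm x * Real.log (μ'.pm x / μ.pm x) : ℝ) : EReal)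
  else ⊤

/-- The relative-entropy projection `μ|θ`. -/
def klProj (μ : PM X) (θ : Set (PM X)) : Set (PM X) :=
  {μ' | μ' ∈ θ ∧ KL μ' μ ≠ ⊤ ∧ ∀ μ'' ∈ θ, KL μ' μ ≤ KL μ'' μ}

/-- `D|θ = ⋃_{μ ∈ D} μ|θ`. -/
def DProj (D : Set (PM X)) (θ : Set (PM X)) : Set (PM X) :=
  ⋃ μ ∈ D, klProj μ θ

end KL

section Products

variable {n : ℕ} {X : Fin n → Type} [∀ i, Fintype (X i)]

/-- The `i`-th marginal of a measure on a finite product. -/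
noncomputable def margPi (μ : PM (∀ i, X i)) (i : Fin n) : PM (X i) where
  pm a := μ.prob {x | x i = a}
  nonneg a := PM.prob_nonneg _ _
  total := by
    classical
    unfold PM.prob
    rw [Finset.sum_comm]
    have h : ∀ x : (∀ i, X i),
        (∑ a, ({y : ∀ j, X j | y i = a}).indicator μ.pm x) = μ.pm x := by
      intro x
      simp [Set.indicator_apply]
    simp only [h]
    exact μ.total

/-- `μ` is a product measure on `X₁ × ⋯ × Xₙ`. -/
def IsProdPM (μ : PM (∀ i, X i)) : Prop :=
  ∃ μi : ∀ i, PM (X i), ∀ U : ∀ i, Set (X i),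
    μ.prob {x | ∀ i, x i ∈ U i} = ∏ i, (μi i).prob (U i)

end Products

/-- The set `P_Π(X)` of product measures. -/
def PPi {n : ℕ} (X : Fin n → Type) [∀ i, Fintype (X i)] : Set (PM (∀ i, X i)) :=
  {μ | IsProdPM μ}

/-- `e` is a product embedding. -/
def IsProdEmb {n : ℕ} {X Y : Fin n → Type} (e : Emb (∀ i, X i) (∀ i, Y i)) : Prop :=
  ∃ ei : ∀ i, Emb (X i) (Y i), ∀ S : Set (∀ i, X i),
    e.f S = ⋃ x ∈ S, {y | ∀ i, y i ∈ (ei i).f {x i}}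



section Stmt10Aux

open scoped Classical

variable {Z W : Type} [Fintype Z] [Fintype W]

/-- Pushforward of a pmf along a map. -/
noncomputable def pushPM (q : Z → W) (ν : PM Z) : PM W where
  pm w := ∑ z, if q z = w then ν.pm z else 0
  nonneg w := Finset.sum_nonneg fun z _ => by
    split <;> simp [ν.nonneg z]
  total := by
    rw [Finset.sum_comm]
    simp [Finset.sum_ite_eq, ν.total]

lemma pushPM_prob (q : Z → W) (ν : PM Z) (S : Set W) :
    (pushPM q ν).prob S = ν.prob (q ⁻¹' S) := by
  classical
  unfold PM.prob pushPM
  simp only [Set.indicator_apply]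
  have h1 : ∀ w : W, (if w ∈ S then (∑ z, if q z = w then ν.pm z else 0) else 0)
      = ∑ z, if q z = w then (if w ∈ S then ν.pm z else 0) else 0 := by
    intro w
    by_cases hw : w ∈ S <;> simp [hw]
  simp only [h1]
  rw [Finset.sum_comm]
  refine Finset.sum_congr rfl fun z _ => ?_
  have h2 : ∀ w : W, (if q z = w then (if w ∈ S then ν.pm z else 0) else 0)
      = if q z = w then (if q z ∈ S then ν.pm z else 0) else 0 := by
    intro w
    by_cases hqw : q z = w
    · subst hqw; rfl
    · simp [hqw]
  simp only [h2]
  simp [Finset.sum_ite_eq, Set.mem_preimage]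

lemma margFst_prob {X Y : Type} [Fintype X] [Fintype Y] (μ : PM (X × Y)) (S : Set X) :
    (margFst μ).prob S = μ.prob (S ×ˢ (Set.univ : Set Y)) := by
  classical
  unfold PM.prob margFst
  simp only [Fintype.sum_prod_type, Set.indicator_apply]
  refine Finset.sum_congr rfl fun x _ => ?_
  by_cases hx : x ∈ S <;> simp [hx, Set.mem_prod]

/-- The embedding induced by taking preimages along `q : Z → W`. -/
def preEmb (q : Z → W) : Emb W Z where
  f S := q ⁻¹' S
  map_union S T := rfl
  map_compl S := rfl

lemma preEmb_faithful (q : Z → W) (hq : Function.Surjective q) :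
    (preEmb q).Faithful := by
  intro S T
  constructor
  · intro h z hz; exact h hz
  · intro h w hw
    obtain ⟨z, rfl⟩ := hq w
    exact h hw

/-- The three splitting maps `Bool × Fin 3 → Bool × Bool`. -/
def qmap (i : Fin 3) : Bool × Fin 3 → Bool × Bool :=
  fun z => (z.1, if z.1 then decide (z.2 = i ∨ z.2 = i + 1) else decide (z.2 = i))

lemma qmap_surj (i : Fin 3) : Function.Surjective (qmap i) := by
  fin_cases i <;> decide


lemma prob6 (nu : PM (Bool × Fin 3)) (S : Set (Bool × Fin 3)) :
    nu.prob S = (S.indicator nu.pm (true, 0) + S.indicator nu.pm (true, 1)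
        + S.indicator nu.pm (true, 2))
      + (S.indicator nu.pm (false, 0) + S.indicator nu.pm (false, 1)
        + S.indicator nu.pm (false, 2)) := by
  unfold PM.prob
  rw [Fintype.sum_prod_type]
  simp [Fin.sum_univ_three]

lemma total6 (nu : PM (Bool × Fin 3)) :
    (nu.pm (true, 0) + nu.pm (true, 1) + nu.pm (true, 2))
      + (nu.pm (false, 0) + nu.pm (false, 1) + nu.pm (false, 2)) = 1 := by
  have h := nu.total
  rw [Fintype.sum_prod_type] at h
  simpa [Fin.sum_univ_three] using h

end Stmt10Aux

/-- no finitary inference procedure satisfying DI1 that enforces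
minimal default independence is representation independent. -/
theorem stmt10 (I : ∀ (X : Type) [Fintype X], InfProc X)
    (h1 : DI1 I) (hmdi : MDI I) :
    ¬ RepInd I := by
  classical
  intro hRI
  -- the knowledge base: μ({true}) = 1/3
  set KB : Set (PM Bool) :=
    {μ | 1/3 ≤ μ.prob {true} ∧ μ.prob {true} ≤ 1/3} with hKBdef
  -- its lift to Bool × Bool
  have hlift : liftKB Bool KB =
      {ν : PM (Bool × Bool) | 1/3 ≤ ν.prob ({true} ×ˢ (Set.univ : Set Bool)) ∧
        ν.prob ({true} ×ˢ (Set.univ : Set Bool)) ≤ 1/3} := by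
    ext ν
    simp [liftKB, hKBdef, margFst_prob]
  have hdom : liftKB Bool KB ∈ (I (Bool × Bool)).dom := by
    rw [hlift]
    exact h1 (Bool × Bool) ({true} ×ˢ (Set.univ : Set Bool)) (1/3) (1/3) le_rfl
  -- preimage of the lifted event is again the lifted event
  have qpre_fst : ∀ i : Fin 3,
      (qmap i) ⁻¹' ({true} ×ˢ (Set.univ : Set Bool)) =
        ({true} ×ˢ (Set.univ : Set (Fin 3))) := by
    intro i
    ext ⟨b, k⟩
    simp [qmap]
    split_ifs <;> tauto
  -- the transported knowledge base
  set KB' : Set (PM (Bool × Fin 3)) :=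
    {ν | 1/3 ≤ ν.prob ({true} ×ˢ (Set.univ : Set (Fin 3))) ∧
      ν.prob ({true} ×ˢ (Set.univ : Set (Fin 3))) ≤ 1/3} with hKB'def
  have hfstar : ∀ i : Fin 3, fstar (preEmb (qmap i)) (liftKB Bool KB) = KB' := by
    intro i
    ext ν
    constructor
    · rintro ⟨μ, hμ, hc⟩
      have hce := hc ({true} ×ˢ (Set.univ : Set Bool))
      have hμ' : 1/3 ≤ μ.prob ({true} ×ˢ (Set.univ : Set Bool)) ∧
          μ.prob ({true} ×ˢ (Set.univ : Set Bool)) ≤ 1/3 := by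
        have := hμ
        simpa [liftKB, hKBdef, margFst_prob] using this
      have hpre : (preEmb (qmap i)).f ({true} ×ˢ (Set.univ : Set Bool)) =
          ({true} ×ˢ (Set.univ : Set (Fin 3))) := qpre_fst i
      rw [hpre] at hce
      exact ⟨hce ▸ hμ'.1, hce ▸ hμ'.2⟩
    · intro hν
      refine ⟨pushPM (qmap i) ν, ?_, fun S => pushPM_prob (qmap i) ν S⟩
      have : (pushPM (qmap i) ν).prob ({true} ×ˢ (Set.univ : Set Bool)) =
          ν.prob ({true} ×ˢ (Set.univ : Set (Fin 3))) := by
        rw [pushPM_prob, qpre_fst i]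
      simp only [liftKB, hKBdef, Set.mem_setOf_eq, margFst_prob, this]
      exact hν
  -- representation independence along the three embeddings
  have hEmb : ∀ i : Fin 3, (preEmb (qmap i)).Faithful :=
    fun i => preEmb_faithful (qmap i) (qmap_surj i)
  -- KB' is in the domain
  have hdom' : KB' ∈ (I (Bool × Fin 3)).dom := by
    have h := ((hRI (Bool × Bool) (Bool × Fin 3) (preEmb (qmap 0)) (hEmb 0)).1
      (liftKB Bool KB)).mp hdom
    rwa [hfstar 0] at h
  -- KB' is nonempty
  have hKB'ne : KB' ≠ ∅ := by
    have hν₀ : (⟨fun z => if z.1 then 1/9 else 2/9,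
        fun z => by by_cases h : z.1 <;> simp [h] <;> norm_num,
        by rw [Fintype.sum_prod_type]; simp [Fin.sum_univ_three]; norm_num⟩ : PM (Bool × Fin 3)) ∈ KB' := by
      constructor <;>
      · rw [prob6]
        simp [Set.indicator_apply]
        norm_num
    intro h
    rw [h] at hν₀
    exact hν₀
  -- pick an element of the inference set
  have hmapne : (I (Bool × Fin 3)).map KB' ≠ ∅ := by
    intro h
    exact hKB'ne (((I (Bool × Fin 3)).map_empty_iff KB' hdom').mp h)
  obtain ⟨ν, hν⟩ := Set.nonempty_iff_ne_empty.mpr hmapne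
  have hνKB' : ν ∈ KB' := (I (Bool × Fin 3)).map_subset KB' hdom' hν
  -- the independence constraint from MDI
  set θ : Set (PM (Bool × Bool)) :=
    {μ | μ.prob (({true} : Set Bool) ×ˢ ({true} : Set Bool)) =
      μ.prob (({true} : Set Bool) ×ˢ (Set.univ : Set Bool)) *
      μ.prob ((Set.univ : Set Bool) ×ˢ ({true} : Set Bool))} with hθdef
  have hθ : ∀ i : Fin 3, ν ∈ fstar (preEmb (qmap i)) θ := by
    intro i
    have hm : Infers (I (Bool × Bool)) (liftKB Bool KB) θ :=
      hmdi Bool Bool KB {true} {true} hdom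
    have h2 := ((hRI (Bool × Bool) (Bool × Fin 3) (preEmb (qmap i)) (hEmb i)).2
      (liftKB Bool KB) hdom θ).mp hm
    rw [hfstar i] at h2
    exact h2 hν
  -- extract the three numeric equations
  have hEq : ∀ i : Fin 3,
      ν.prob ((qmap i) ⁻¹' (({true} : Set Bool) ×ˢ ({true} : Set Bool))) =
      ν.prob ((qmap i) ⁻¹' (({true} : Set Bool) ×ˢ (Set.univ : Set Bool))) *
      ν.prob ((qmap i) ⁻¹' ((Set.univ : Set Bool) ×ˢ ({true} : Set Bool))) := by
    intro i
    obtain ⟨μ, hμθ, hc⟩ := hθ i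
    have h1' := hc (({true} : Set Bool) ×ˢ ({true} : Set Bool))
    have h2' := hc (({true} : Set Bool) ×ˢ (Set.univ : Set Bool))
    have h3' := hc ((Set.univ : Set Bool) ×ˢ ({true} : Set Bool))
    have hμθ' := hμθ
    rw [hθdef] at hμθ'
    simp only [Set.mem_setOf_eq] at hμθ'
    rw [h1', h2', h3'] at hμθ'
    exact hμθ'
  have htot : (ν.pm (true, 0) + ν.pm (true, 1) + ν.pm (true, 2))
      + (ν.pm (false, 0) + ν.pm (false, 1) + ν.pm (false, 2)) = 1 := total6 ν
  have hsum : ν.pm (true, 0) + ν.pm (true, 1) + ν.pm (true, 2) = 1/3 := by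
    have h := hνKB'
    rw [hKB'def] at h
    simp only [Set.mem_setOf_eq] at h
    have he : ν.prob ({true} ×ˢ (Set.univ : Set (Fin 3)))
        = ν.pm (true, 0) + ν.pm (true, 1) + ν.pm (true, 2) := by
      rw [prob6]; simp [Set.indicator_apply]
    rw [he] at h
    linarith [h.1, h.2]
  have hE0 := hEq 0
  have hE1 := hEq 1
  have hE2 := hEq 2
  rw [prob6, prob6, prob6] at hE0 hE1 hE2
  simp only [Set.indicator_apply, Set.mem_preimage, Set.mem_prod, Set.mem_singleton_iff,
    Set.mem_univ, qmap] at hE0 hE1 hE2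
  simp at hE0 hE1 hE2
  nlinarith [hE0, hE1, hE2, htot, hsum]
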